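/- Let A be a bounded self-adjoint Fredholm operator on a complex Hilbert space H and let p be the orthogonal projection of H onto ker(A). Then p commutes with A; for every real number t ≠ 0 the operator A + t·p is invertible; if ker(A) ≠ 0 then the spectrum of A + t·p equals (spectrum(A) \ {0}) ∪ {t}; and if in addition A is neither essentially positive nor essentially negative, then A + t·p is neither essentially positive nor essentially negative. -/

import Mathlib

open scoped ComplexOrder

/-- A bounded operator on a Hilbert space is Fredholm if its kernel is finite-dimensional
and its range is closed and of finite codimension. -/
def IsFredholm {H : Type*} [NormedAddCommGroup H] [InnerProductSpace ℂ H]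
    (T : H →L[ℂ] H) : Prop :=
  FiniteDimensional ℂ (LinearMap.ker (T : H →ₗ[ℂ] H)) ∧ IsClosed (LinearMap.range (T : H →ₗ[ℂ] H) : Set H) ∧
    FiniteDimensional ℂ (H ⧸ LinearMap.range (T : H →ₗ[ℂ] H))

/-- A bounded self-adjoint operator is essentially positive if there is a closed invariant
subspace of finite codimension on which it is positive definite. -/
def EssentiallyPositive {H : Type*} [NormedAddCommGroup H] [InnerProductSpace ℂ H]
    (A : H →L[ℂ] H) : Prop :=
  ∃ U : Submodule ℂ H, IsClosed (U : Set H) ∧ FiniteDimensional ℂ (H ⧸ U) ∧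
    (∀ u ∈ U, A u ∈ U) ∧ ∀ u ∈ U, u ≠ 0 → 0 < (inner ℂ (A u) u : ℂ)

open Classical in
/-- The orthogonal projection of `H` onto the kernel of `T`, as a bounded operator
`H →L[ℂ] H` (defined to be `0` if the kernel is not finite-dimensional). -/
noncomputable def kerProjection {H : Type*} [NormedAddCommGroup H] [InnerProductSpace ℂ H]
    (T : H →L[ℂ] H) : H →L[ℂ] H :=
  if h : FiniteDimensional ℂ (LinearMap.ker (T : H →ₗ[ℂ] H)) then
    haveI := h
    (LinearMap.ker (T : H →ₗ[ℂ] H)).subtypeL.comp (Submodule.orthogonalProjectionOnto (LinearMap.ker (T : H →ₗ[ℂ] H)))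
  else 0


/-- Auxiliary: `1 + s • q` is a unit when `q` is idempotent and `1 + s ≠ 0`. -/
lemma aux_unit_one_add {R : Type*} [Ring R] [Algebra ℂ R] (q : R) (hq : q * q = q)
    (s : ℂ) (hs : 1 + s ≠ 0) : IsUnit (1 + s • q) := by
  have key : ∀ a b : ℂ, (1 + a • q) * (1 + b • q) = 1 + (a + b + a * b) • q := by
    intro a b
    rw [add_mul, one_mul, mul_add, mul_one, smul_mul_assoc, mul_smul_comm, hq, smul_smul,
      add_smul, add_smul]
    abel
  have hcoef : ∀ a b : ℂ, a + b + a * b = 0 → (1 + a • q) * (1 + b • q) = 1 := by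
    intro a b hab
    rw [key, hab, zero_smul, add_zero]
  refine ⟨⟨1 + s • q, 1 + (-(s / (1 + s))) • q, hcoef _ _ (by field_simp; ring),
    hcoef _ _ (by field_simp; ring)⟩, rfl⟩

/-- Auxiliary: if `X` is a unit with `X * q = μ • q` for an idempotent `q`, then
`X + ν • q` is a unit provided `μ ≠ 0` and `μ + ν ≠ 0`. -/
lemma aux_unit_add {R : Type*} [Ring R] [Algebra ℂ R] {X q : R} (hq : q * q = q)
    (hX : IsUnit X) {μ : ℂ} (h1 : X * q = μ • q) (ν : ℂ) (hμ : μ ≠ 0) (hμν : μ + ν ≠ 0) :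
    IsUnit (X + ν • q) := by
  have hs : (1 : ℂ) + ν / μ ≠ 0 := by
    have : (1 : ℂ) + ν / μ = (μ + ν) / μ := by field_simp
    rw [this]
    exact div_ne_zero hμν hμ
  have hfac : X + ν • q = X * (1 + (ν / μ) • q) := by
    rw [mul_add, mul_one, mul_smul_comm, h1, smul_smul, div_mul_cancel₀ _ hμ]
  rw [hfac]
  exact hX.mul (aux_unit_one_add q hq _ hs)

lemma aux_not_unit {H : Type*} [NormedAddCommGroup H] [InnerProductSpace ℂ H]
    (B : H →L[ℂ] H) (x : H) (hx : x ≠ 0) (hBx : B x = 0) : ¬IsUnit B := by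
  rintro ⟨u, rfl⟩
  apply hx
  have h1 := congrArg (fun f : H →L[ℂ] H => f x) u.inv_mul
  simp only [ContinuousLinearMap.mul_apply, ContinuousLinearMap.one_apply] at h1
  rw [hBx, map_zero] at h1
  exact h1.symm

/-- Auxiliary: quotient by the intersection of two finite-codimensional submodules is
finite-dimensional. -/
lemma aux_quot_inf {H : Type*} [AddCommGroup H] [Module ℂ H] (U V : Submodule ℂ H)
    [FiniteDimensional ℂ (H ⧸ U)] [FiniteDimensional ℂ (H ⧸ V)] :
    FiniteDimensional ℂ (H ⧸ (U ⊓ V)) := by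
  have hker : LinearMap.ker (U.mkQ.prod V.mkQ) = U ⊓ V := by
    rw [LinearMap.ker_prod, Submodule.ker_mkQ, Submodule.ker_mkQ]
  refine FiniteDimensional.of_injective ((U ⊓ V).liftQ (U.mkQ.prod V.mkQ) hker.ge) ?_
  rw [← LinearMap.ker_eq_bot]
  exact Submodule.ker_liftQ_eq_bot _ _ _ hker.le

/-- Transfer essential positivity along operators agreeing on `Kᗮ` for a
finite-dimensional `K`. -/
lemma aux_transfer {H : Type*} [NormedAddCommGroup H] [InnerProductSpace ℂ H] [CompleteSpace H]
    (K : Submodule ℂ H) [FiniteDimensional ℂ K] (A' B : H →L[ℂ] H)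
    (hinv : ∀ u ∈ Kᗮ, A' u ∈ Kᗮ) (heq : ∀ u ∈ Kᗮ, B u = A' u)
    (h : EssentiallyPositive B) : EssentiallyPositive A' := by
  obtain ⟨U, hUc, hUf, hUinv, hUpos⟩ := h
  haveI : FiniteDimensional ℂ (H ⧸ Kᗮ) :=
    (Submodule.quotientEquivOfIsCompl Kᗮ K
      Submodule.isCompl_orthogonal_of_hasOrthogonalProjection.symm).symm.finiteDimensional
  haveI := hUf
  refine ⟨U ⊓ Kᗮ, ?_, aux_quot_inf U Kᗮ, ?_, ?_⟩
  · exact hUc.inter K.isClosed_orthogonal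
  · rintro u ⟨hu1, hu2⟩
    have := hUinv u hu1
    rw [heq u hu2] at this
    exact ⟨this, hinv u hu2⟩
  · intro u hu hne
    have := hUpos u hu.1 hne
    rwa [heq u hu.2] at this

/-- Let `A` be a bounded self-adjoint Fredholm operator and `p` the
orthogonal projection onto its kernel.  Then `p` commutes with `A`; `A + t • p` is
invertible for every real `t ≠ 0`; if the kernel is nonzero then
`spectrum (A + t • p) = (spectrum A \ {0}) ∪ {t}`; and if `A` is neither essentially
positive nor essentially negative, then so is `A + t • p`. -/
theorem stmt2 {H : Type*} [NormedAddCommGroup H] [InnerProductSpace ℂ H] [CompleteSpace H]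
    (A : H →L[ℂ] H) (hsa : IsSelfAdjoint A) (hfred : IsFredholm A) :
    Commute A (kerProjection A) ∧
    (∀ t : ℝ, t ≠ 0 → IsUnit (A + (t : ℂ) • kerProjection A)) ∧
    (LinearMap.ker (A : H →ₗ[ℂ] H) ≠ ⊥ → ∀ t : ℝ, t ≠ 0 →
      spectrum ℂ (A + (t : ℂ) • kerProjection A) = (spectrum ℂ A \ {0}) ∪ {(t : ℂ)}) ∧
    ((¬EssentiallyPositive A ∧ ¬EssentiallyPositive (-A)) → ∀ t : ℝ, t ≠ 0 →
      ¬EssentiallyPositive (A + (t : ℂ) • kerProjection A) ∧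
      ¬EssentiallyPositive (-(A + (t : ℂ) • kerProjection A))) := by
  classical
  set K := LinearMap.ker (A : H →ₗ[ℂ] H) with hKdef
  haveI hKfd : FiniteDimensional ℂ K := hfred.1
  set p := kerProjection A with hpdef
  have hp : p = K.subtypeL.comp (Submodule.orthogonalProjectionOnto K) := dif_pos hfred.1
  -- basic facts about p
  have hp_mem : ∀ x : H, p x ∈ K := by
    intro x; rw [hp]; exact (Submodule.orthogonalProjectionOnto K x).2
  have hp_id : ∀ x ∈ K, p x = x := by
    intro x hx; rw [hp]
    exact Submodule.starProjection_eq_self_iff.mpr hx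
  have hp_zero : ∀ x ∈ Kᗮ, p x = 0 := by
    intro x hx; rw [hp]
    simp only [ContinuousLinearMap.comp_apply, Submodule.subtypeL_apply]
    rw [Submodule.orthogonalProjectionOnto_apply_of_mem_orthogonal hx]
    rfl
  have hsym := hsa.isSymmetric
  have hAorth : ∀ x : H, A x ∈ Kᗮ := by
    intro x
    rw [Submodule.mem_orthogonal]
    intro k hk
    have hAk : A k = 0 := hk
    calc inner ℂ k (A x) = inner ℂ (A k) x := (hsym k x).symm
      _ = (0 : ℂ) := by rw [hAk, inner_zero_left]
  have hAp : ∀ x : H, A (p x) = 0 := fun x => hp_mem x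
  have hpA : ∀ x : H, p (A x) = 0 := fun x => hp_zero _ (hAorth x)
  have hpp : ∀ x : H, p (p x) = p x := fun x => hp_id _ (hp_mem x)
  -- range A = Kᗮ
  have horth : Kᗮ ≤ LinearMap.range (A : H →ₗ[ℂ] H) := by
    have h1 : (LinearMap.range (A : H →ₗ[ℂ] H))ᗮ ≤ K := by
      intro w hw
      have hAw : A w = 0 := by
        rw [← inner_self_eq_zero (𝕜 := ℂ) (x := A w)]
        have h2 : inner ℂ (A (A w)) w = (0 : ℂ) :=
          hw (A (A w)) (LinearMap.mem_range_self _ _)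
        have h3 : inner ℂ w (A (A w)) = (0 : ℂ) := by
          rw [← inner_conj_symm, h2, map_zero]
        have h4 : inner ℂ (A w) (A w) = (inner ℂ w (A (A w)) : ℂ) := hsym w (A w)
        rw [h4]
        exact h3
      exact hAw
    have h2 : Kᗮ ≤ ((LinearMap.range (A : H →ₗ[ℂ] H))ᗮ)ᗮ := Submodule.orthogonal_le h1
    rwa [Submodule.orthogonal_orthogonal_eq_closure,
      hfred.2.1.submodule_topologicalClosure_eq] at h2
  -- commutation
  have hApzero : A * p = 0 := by ext x; exact hAp x
  have hpAzero : p * A = 0 := by ext x; exact hpA x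
  have hppeq : p * p = p := by ext x; exact hpp x
  have hcomm : Commute A p := by
    unfold Commute SemiconjBy
    rw [hApzero, hpAzero]
  -- invertibility
  have hunit : ∀ t : ℝ, t ≠ 0 → IsUnit (A + (t : ℂ) • p) := by
    intro t ht
    have htc : (t : ℂ) ≠ 0 := Complex.ofReal_ne_zero.mpr ht
    rw [ContinuousLinearMap.isUnit_iff_bijective]
    constructor
    · -- injective
      rw [injective_iff_map_eq_zero]
      intro z hxz
      simp only [ContinuousLinearMap.add_apply, ContinuousLinearMap.smul_apply] at hxz
      have h2 : p (A z + (t : ℂ) • p z) = 0 := by rw [hxz, map_zero]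
      rw [map_add, map_smul, hpA, hpp, zero_add] at h2
      have hpz : p z = 0 := by
        have := smul_eq_zero.mp h2
        tauto
      rw [hpz, smul_zero, add_zero] at hxz
      have hzK : z ∈ K := hxz
      rw [← hp_id z hzK, hpz]
    · -- surjective
      intro y
      obtain ⟨z, hz⟩ := horth (Submodule.sub_starProjection_mem_orthogonal (K := K) y)
      have hz' : A z = y - p y := by
        rw [show A z = (A : H →ₗ[ℂ] H) z from rfl, hz, hp]; rfl
      refine ⟨z - p z + ((t : ℂ))⁻¹ • p y, ?_⟩
      simp only [ContinuousLinearMap.add_apply, ContinuousLinearMap.smul_apply,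
        map_add, map_sub, map_smul]
      rw [hAp, hAp, hpp, hpp, hz']
      simp only [zero_add, smul_smul, inv_mul_cancel₀ htc, one_smul]
      abel
  refine ⟨hcomm, hunit, ?_, ?_⟩
  · -- spectrum
    intro hKne t ht
    have htc : (t : ℂ) ≠ 0 := Complex.ofReal_ne_zero.mpr ht
    obtain ⟨k, hkK, hk0⟩ := Submodule.exists_mem_ne_zero_of_ne_bot hKne
    have hAk : A k = 0 := hkK
    ext lam
    simp only [Set.mem_union, Set.mem_diff, Set.mem_singleton_iff, spectrum.mem_iff]
    have hCp : (algebraMap ℂ (H →L[ℂ] H) lam - A) * p = lam • p := by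
      rw [sub_mul, hApzero, sub_zero, Algebra.algebraMap_eq_smul_one, smul_mul_assoc, one_mul]
    have hBp : (algebraMap ℂ (H →L[ℂ] H) lam - (A + (t : ℂ) • p)) * p = (lam - t) • p := by
      rw [sub_mul, add_mul, hApzero, zero_add, smul_mul_assoc, hppeq,
        Algebra.algebraMap_eq_smul_one, smul_mul_assoc, one_mul, sub_smul]
    have hBC : algebraMap ℂ (H →L[ℂ] H) lam - (A + (t : ℂ) • p)
        = (algebraMap ℂ (H →L[ℂ] H) lam - A) + (-(t : ℂ)) • p := by
      rw [neg_smul]; abel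
    have hCB : algebraMap ℂ (H →L[ℂ] H) lam - A
        = (algebraMap ℂ (H →L[ℂ] H) lam - (A + (t : ℂ) • p)) + (t : ℂ) • p := by
      abel
    by_cases hlt : lam = (t : ℂ)
    · subst hlt
      constructor
      · intro _; right; rfl
      · intro _
        apply aux_not_unit _ k hk0
        have halg : (algebraMap ℂ (H →L[ℂ] H) (t : ℂ)) k = (t : ℂ) • k := by
          rw [Algebra.algebraMap_eq_smul_one, ContinuousLinearMap.smul_apply,
            ContinuousLinearMap.one_apply]
        rw [ContinuousLinearMap.sub_apply, ContinuousLinearMap.add_apply,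
          ContinuousLinearMap.smul_apply, halg, hAk, hp_id k hkK, zero_add, sub_self]
    · by_cases hl0 : lam = 0
      · subst hl0
        have hu : IsUnit (algebraMap ℂ (H →L[ℂ] H) 0 - (A + (t : ℂ) • p)) := by
          rw [map_zero, zero_sub]
          exact (hunit t ht).neg
        constructor
        · intro h; exact absurd hu h
        · rintro (⟨_, h⟩ | h)
          · exact absurd rfl h
          · exact absurd h.symm (by simpa using htc)
      · -- lam ≠ 0, lam ≠ t
        have hiff : IsUnit (algebraMap ℂ (H →L[ℂ] H) lam - (A + (t : ℂ) • p)) ↔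
            IsUnit (algebraMap ℂ (H →L[ℂ] H) lam - A) := by
          constructor
          · intro h
            rw [hCB]
            exact aux_unit_add hppeq h hBp (t : ℂ) (sub_ne_zero.mpr hlt)
              (by rwa [sub_add_cancel])
          · intro h
            rw [hBC]
            exact aux_unit_add hppeq h hCp (-(t : ℂ)) hl0
              (by rwa [← sub_eq_add_neg, sub_ne_zero])
        rw [not_iff_not.mpr hiff]
        constructor
        · intro h; exact Or.inl ⟨h, hl0⟩
        · rintro (⟨h, _⟩ | h)
          · exact h
          · exact absurd h hlt
  · -- essential positivity
    rintro ⟨hEP, hEN⟩ t ht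
    have heq1 : ∀ u ∈ Kᗮ, (A + (t : ℂ) • p) u = A u := by
      intro u hu
      simp only [ContinuousLinearMap.add_apply, ContinuousLinearMap.smul_apply]
      rw [hp_zero u hu, smul_zero, add_zero]
    constructor
    · intro h
      exact hEP (aux_transfer K A (A + (t : ℂ) • p) (fun u _ => hAorth u) heq1 h)
    · intro h
      refine hEN (aux_transfer K (-A) (-(A + (t : ℂ) • p))
        (fun u _ => Submodule.neg_mem _ (hAorth u)) ?_ h)
      intro u hu
      simp only [ContinuousLinearMap.neg_apply]
      rw [heq1 u hu]
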